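/- Let L : C^∞(M) → C(M) be a linear map with L(1) = 0 that is local (if f vanishes on a neighbourhood of x then L(f)(x) = 0) and conditionally positive definite (for all f₁,…,f_k ∈ C^∞(M) and x ∈ M the matrix (k_L(f_i,f_j)(x)) is positive semidefinite, where k_L(f,g) := L(f̄g) − L(f̄)g − f̄L(g)). Then for any x ∈ M and any smooth real functions f₁,…,f_k with f_i(x) = 0 for all i, and any g_{ij} ∈ C^∞(M) with g_{ij}(x) = 0 for all i,j, one has L(f_i f_j g_{ij})(x) = 0 for all i,j. -/

import Mathlib

open scoped Manifold ComplexOrder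

noncomputable instance : ContMDiffRing 𝓘(ℝ, ℂ) (⊤ : ℕ∞) ℂ where
  contMDiff_mul := by
    rw [← modelWithCornersSelf_prod, chartedSpaceSelf_prod]
    exact contMDiff_iff_contDiff.mpr (contDiff_fst.mul contDiff_snd)

variable {m : ℕ} {M : Type*} [TopologicalSpace M] [ChartedSpace (EuclideanSpace ℝ (Fin m)) M]
  [IsManifold (𝓡 m) (⊤ : ℕ∞) M]


noncomputable instance : SMul ℂ C^(⊤ : ℕ∞)⟮𝓡 m, M; 𝓘(ℝ, ℂ), ℂ⟯ :=
  ⟨fun c f => ⟨fun x => c * f x, ContMDiff.mul contMDiff_const f.contMDiff⟩⟩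

noncomputable instance : Module ℂ C^(⊤ : ℕ∞)⟮𝓡 m, M; 𝓘(ℝ, ℂ), ℂ⟯ :=
  Function.Injective.module ℂ
    ({ toFun := fun f => (f : M → ℂ), map_zero' := rfl, map_add' := fun _ _ => rfl } :
      C^(⊤ : ℕ∞)⟮𝓡 m, M; 𝓘(ℝ, ℂ), ℂ⟯ →+ (M → ℂ))
    (fun f g h => ContMDiffMap.ext (congrFun h)) (fun _ _ => rfl)

/-- Pointwise complex conjugate of a smooth complex-valued function. -/
noncomputable def conjSM (f : C^(⊤ : ℕ∞)⟮𝓡 m, M; 𝓘(ℝ, ℂ), ℂ⟯) :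
    C^(⊤ : ℕ∞)⟮𝓡 m, M; 𝓘(ℝ, ℂ), ℂ⟯ :=
  ⟨fun x => starRingEnd ℂ (f x), by
    have h : ContMDiff 𝓘(ℝ, ℂ) 𝓘(ℝ, ℂ) (⊤ : ℕ∞) (fun z : ℂ => starRingEnd ℂ z) :=
      contMDiff_iff_contDiff.mpr Complex.conjCLE.toContinuousLinearMap.contDiff
    exact h.comp f.contMDiff⟩

/-- The carré du champ `k_L(f,g) = L(f̄ g) - L(f̄) g - f̄ L(g)` associated to a linear map
`L : C^∞(M) → C(M)`. -/
noncomputable def carreDuChamp (L : C^(⊤ : ℕ∞)⟮𝓡 m, M; 𝓘(ℝ, ℂ), ℂ⟯ →ₗ[ℂ] C(M, ℂ))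
    (f g : C^(⊤ : ℕ∞)⟮𝓡 m, M; 𝓘(ℝ, ℂ), ℂ⟯) : M → ℂ :=
  fun x => L (conjSM f * g) x - L (conjSM f) x * g x - starRingEnd ℂ (f x) * L g x

/-- `L` is local: if `f` vanishes on a neighbourhood of `x` then `L f x = 0`. -/
def IsLocalOp (L : C^(⊤ : ℕ∞)⟮𝓡 m, M; 𝓘(ℝ, ℂ), ℂ⟯ →ₗ[ℂ] C(M, ℂ)) : Prop :=
  ∀ (x : M) (f : C^(⊤ : ℕ∞)⟮𝓡 m, M; 𝓘(ℝ, ℂ), ℂ⟯),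
    (∀ᶠ y in nhds x, f y = 0) → L f x = 0

/-- `L` is real: `L(f̄) = conj (L f)` pointwise. -/
def IsRealOp (L : C^(⊤ : ℕ∞)⟮𝓡 m, M; 𝓘(ℝ, ℂ), ℂ⟯ →ₗ[ℂ] C(M, ℂ)) : Prop :=
  ∀ (f : C^(⊤ : ℕ∞)⟮𝓡 m, M; 𝓘(ℝ, ℂ), ℂ⟯) (x : M), L (conjSM f) x = starRingEnd ℂ (L f x)

/-- `L` is conditionally positive definite: for all smooth `f₁, …, f_k` and every `x ∈ M`,
the matrix `(k_L(f_i, f_j)(x))_{i,j}` is positive semidefinite. -/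
def IsCondPosDef (L : C^(⊤ : ℕ∞)⟮𝓡 m, M; 𝓘(ℝ, ℂ), ℂ⟯ →ₗ[ℂ] C(M, ℂ)) : Prop :=
  IsRealOp L ∧ ∀ (k : ℕ) (f : Fin k → C^(⊤ : ℕ∞)⟮𝓡 m, M; 𝓘(ℝ, ℂ), ℂ⟯) (x : M),
    (Matrix.of fun i j => carreDuChamp L (f i) (f j) x).PosSemidef

/-- Positivity: if `h` is real and vanishes at `x`, then `0 ≤ L (h*h) x`. -/
theorem aux_pos (L : C^(⊤ : ℕ∞)⟮𝓡 m, M; 𝓘(ℝ, ℂ), ℂ⟯ →ₗ[ℂ] C(M, ℂ))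
    (hcpd : IsCondPosDef L) (x : M) (h : C^(⊤ : ℕ∞)⟮𝓡 m, M; 𝓘(ℝ, ℂ), ℂ⟯)
    (hre : ∀ y, starRingEnd ℂ (h y) = h y) (hx : h x = 0) :
    0 ≤ L (h * h) x := by
  have hp := (hcpd.2 1 ![h] x).dotProduct_mulVec_nonneg ![1]
  have hconj : conjSM h = h := ContMDiffMap.ext fun y => hre y
  have hc : carreDuChamp L h h x = L (h * h) x := by
    simp [carreDuChamp, hconj, hx]
  simpa [Matrix.mulVec, dotProduct, hc] using hp

/-- Key inequality: `0 ≤ ε L(F²) x - L(F² G) x` for real `F, G` vanishing at `x`. -/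
theorem aux_ineq (L : C^(⊤ : ℕ∞)⟮𝓡 m, M; 𝓘(ℝ, ℂ), ℂ⟯ →ₗ[ℂ] C(M, ℂ))
    (hloc : IsLocalOp L) (hcpd : IsCondPosDef L) (x : M)
    (F G : C^(⊤ : ℕ∞)⟮𝓡 m, M; 𝓘(ℝ, ℂ), ℂ⟯)
    (hF : ∀ y, starRingEnd ℂ (F y) = F y) (hG : ∀ y, starRingEnd ℂ (G y) = G y)
    (hFx : F x = 0) (hGx : G x = 0) (ε : ℝ) (hε : 0 < ε) :
    0 ≤ (ε : ℂ) * L (F * F) x - L (F * F * G) x := by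
  -- the truncation function
  have hb : (0:ℝ) < ε/4 ∧ ε/4 < 2*(ε/4) := ⟨by linarith, by linarith⟩
  set b : ContDiffBump (0:ℝ) := ⟨ε/4, 2*(ε/4), hb.1, hb.2⟩ with hbdef
  set φ : ℝ → ℝ := fun t => t * b t with hφdef
  have hφ : ContDiff ℝ (↑(⊤:ℕ∞)) φ := contDiff_id.mul b.contDiff
  have hφeq : ∀ t : ℝ, |t| ≤ ε/4 → φ t = t := by
    intro t ht
    have : b t = 1 := b.one_of_mem_closedBall (by simpa [Real.dist_eq] using ht)
    simp [hφdef, this]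
  have hbd : ∀ t, |φ t| ≤ ε/2 := by
    intro t
    rcases le_or_gt (2*(ε/4)) (|t|) with hcase | hcase
    · have : b t = 0 := b.zero_of_le_dist (by simpa [Real.dist_eq] using hcase)
      simp only [hφdef, this, mul_zero, abs_zero]; linarith
    · have h0 := b.nonneg (x := t)
      have h1 := b.le_one (x := t)
      calc |t * b t| = |t| * b t := by rw [abs_mul, abs_of_nonneg h0]
        _ ≤ 2*(ε/4) * 1 := mul_le_mul hcase.le h1 h0 (by linarith)
        _ ≤ ε/2 := by linarith
  have hpos : ∀ t : ℝ, ε/2 ≤ ε - φ t := by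
    intro t; have := abs_le.1 (hbd t); linarith [this.2]
  -- the smooth square-root function
  have hsmooth : ContMDiff (𝓡 m) 𝓘(ℝ, ℂ) (⊤ : ℕ∞)
      (fun y => (Real.sqrt (ε - φ ((G y).re)) : ℂ)) := by
    have h1 : ContDiff ℝ (↑(⊤:ℕ∞)) (fun z : ℂ => (Real.sqrt (ε - φ z.re) : ℂ)) := by
      have hin : ContDiff ℝ (↑(⊤:ℕ∞)) (fun z : ℂ => ε - φ z.re) :=
        contDiff_const.sub (hφ.comp (Complex.reCLM.contDiff))
      have hsq : ContDiff ℝ (↑(⊤:ℕ∞)) (fun z : ℂ => Real.sqrt (ε - φ z.re)) := by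
        rw [contDiff_iff_contDiffAt]
        intro z
        exact (Real.contDiffAt_sqrt
          (by have := hpos z.re; intro hc; rw [hc] at this; linarith)).comp z hin.contDiffAt
      exact Complex.ofRealCLM.contDiff.comp hsq
    exact (contMDiff_iff_contDiff.mpr h1).comp G.contMDiff
  set s : C^(⊤ : ℕ∞)⟮𝓡 m, M; 𝓘(ℝ, ℂ), ℂ⟯ :=
    ⟨fun y => (Real.sqrt (ε - φ ((G y).re)) : ℂ), hsmooth⟩ with hsdef
  have hsre : ∀ y, starRingEnd ℂ (s y) = s y := fun y => Complex.conj_ofReal _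
  -- positivity for h = F * s
  have hh := aux_pos L hcpd x (F * s)
    (fun y => by
      show starRingEnd ℂ (F y * s y) = F y * s y
      rw [map_mul, hF y, hsre y])
    (by show F x * s x = 0; rw [hFx, zero_mul])
  have hhsq : F * s * (F * s) = F * F * (s * s) := by ring
  rw [hhsq] at hh
  -- locality : near x, F*F*(s*s) agrees with ε•(F*F) - F*F*G
  have hGreal : ∀ y, G y = (((G y).re : ℝ) : ℂ) := by
    intro y
    have := hG y
    have him : (G y).im = 0 := by
      have := congrArg Complex.im this
      simp at this; linarith
    exact Complex.ext (by simp) (by simp [him])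
  have hloc0 : L ((ε : ℂ) • (F * F) - F * F * G - F * F * (s * s)) x = 0 := by
    apply hloc x
    have hcont : Continuous fun y => (G y).re :=
      Complex.continuous_re.comp G.contMDiff.continuous
    have hGx' : (fun y => (G y).re) x = 0 := by simp [hGx]
    have hnhds : ∀ᶠ y in nhds x, |(G y).re| < ε/4 := by
      have : ∀ᶠ y in nhds x, (G y).re ∈ Set.Ioo (-(ε/4)) (ε/4) := by
        apply (hcont.tendsto x).eventually
        rw [show (G x).re = 0 by simp [hGx]]
        exact Ioo_mem_nhds (by linarith) (by linarith)
      filter_upwards [this] with y hy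
      rw [abs_lt]; exact ⟨hy.1, hy.2⟩
    filter_upwards [hnhds] with y hy
    have hφy : φ ((G y).re) = (G y).re := hφeq _ hy.le
    have hsy : s y * s y = (ε : ℂ) - G y := by
      have hsimp : s y = ((Real.sqrt (ε - φ ((G y).re)) : ℝ) : ℂ) := rfl
      rw [hsimp, hφy, ← Complex.ofReal_mul,
        Real.mul_self_sqrt (by have := abs_le.1 hy.le; linarith [this.2]),
        Complex.ofReal_sub, ← hGreal y]
    show (ε : ℂ) * ((F * F) y) - (F * F * G) y - (F * F * (s * s)) y = 0
    show (ε : ℂ) * (F y * F y) - F y * F y * G y - F y * F y * (s y * s y) = 0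
    rw [hsy]; ring
  rw [map_sub, map_sub, map_smul] at hloc0
  have hexp : ((ε : ℂ) • L (F * F) - L (F * F * G) - L (F * F * (s * s))) x = 0 := hloc0
  simp only [ContinuousMap.sub_apply, ContinuousMap.smul_apply, smul_eq_mul] at hexp
  have : (ε : ℂ) * L (F * F) x - L (F * F * G) x = L (F * F * (s * s)) x := by linear_combination hexp
  rw [this]
  exact hh

/-- For real `F, G` vanishing at `x`, `L (F*F*G) x = 0`. -/
theorem aux_sq_real (L : C^(⊤ : ℕ∞)⟮𝓡 m, M; 𝓘(ℝ, ℂ), ℂ⟯ →ₗ[ℂ] C(M, ℂ))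
    (hloc : IsLocalOp L) (hcpd : IsCondPosDef L) (x : M)
    (F G : C^(⊤ : ℕ∞)⟮𝓡 m, M; 𝓘(ℝ, ℂ), ℂ⟯)
    (hF : ∀ y, starRingEnd ℂ (F y) = F y) (hG : ∀ y, starRingEnd ℂ (G y) = G y)
    (hFx : F x = 0) (hGx : G x = 0) : L (F * F * G) x = 0 := by
  have hc := aux_pos L hcpd x F hF hFx
  set c := L (F * F) x with hcdef
  have hcim : c.im = 0 := by
    have := (Complex.le_def.1 hc).2; simpa using this.symm
  have hcre : 0 ≤ c.re := by simpa using (Complex.le_def.1 hc).1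
  set r := L (F * F * G) x with hrdef
  have h1 : ∀ ε : ℝ, 0 < ε → 0 ≤ (ε : ℂ) * c - r := fun ε hε =>
    aux_ineq L hloc hcpd x F G hF hG hFx hGx ε hε
  have h2 : ∀ ε : ℝ, 0 < ε → 0 ≤ (ε : ℂ) * c + r := by
    intro ε hε
    have hGneg : ∀ y, starRingEnd ℂ ((-G) y) = (-G) y := by
      intro y; show starRingEnd ℂ (-(G y)) = -(G y); rw [map_neg, hG y]
    have hGnx : (-G) x = 0 := by show -(G x) = 0; rw [hGx, neg_zero]
    have := aux_ineq L hloc hcpd x F (-G) hF hGneg hFx hGnx ε hε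
    have he : F * F * -G = -(F * F * G) := by ring
    rw [he, map_neg] at this
    simpa [sub_neg_eq_add] using this
  have him : r.im = 0 := by
    have := (Complex.le_def.1 (h1 1 one_pos)).2
    simp [hcim] at this
    linarith [this]
  have hre0 : ∀ ε : ℝ, 0 < ε → |r.re| ≤ ε * c.re := by
    intro ε hε
    have a1 := (Complex.le_def.1 (h1 ε hε)).1
    have a2 := (Complex.le_def.1 (h2 ε hε)).1
    simp [Complex.sub_re, Complex.add_re, Complex.mul_re, hcim] at a1 a2
    rw [abs_le]; constructor <;> nlinarith [a1, a2]
  have hr0 : r.re = 0 := by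
    by_contra hne
    have hpos' : 0 < |r.re| := abs_pos.2 hne
    have hc1 : 0 < c.re + 1 := by linarith
    have := hre0 (|r.re| / (2 * (c.re + 1))) (by positivity)
    rw [div_mul_eq_mul_div, le_div_iff₀ (by positivity)] at this
    nlinarith [hpos', hcre]
  exact Complex.ext (by simp [hr0]) (by simp [him])

/-- For real `F` vanishing at `x` and arbitrary smooth `G` vanishing at `x`,
`L (F*F*G) x = 0`. -/
theorem aux_sq (L : C^(⊤ : ℕ∞)⟮𝓡 m, M; 𝓘(ℝ, ℂ), ℂ⟯ →ₗ[ℂ] C(M, ℂ))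
    (hloc : IsLocalOp L) (hcpd : IsCondPosDef L) (x : M)
    (F G : C^(⊤ : ℕ∞)⟮𝓡 m, M; 𝓘(ℝ, ℂ), ℂ⟯)
    (hF : ∀ y, starRingEnd ℂ (F y) = F y)
    (hFx : F x = 0) (hGx : G x = 0) : L (F * F * G) x = 0 := by
  set G₁ := (1/2 : ℂ) • (G + conjSM G) with hG1
  set G₂ := (-(Complex.I)/2) • (G - conjSM G) with hG2
  have hG1y : ∀ y, G₁ y = (1/2 : ℂ) * (G y + starRingEnd ℂ (G y)) := fun y => rfl
  have hG2y : ∀ y, G₂ y = (-(Complex.I)/2) * (G y - starRingEnd ℂ (G y)) := fun y => rfl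
  have hG1re : ∀ y, starRingEnd ℂ (G₁ y) = G₁ y := by
    intro y; rw [hG1y]
    simp only [map_mul, map_add, map_div₀, map_one, Complex.conj_conj, map_ofNat]
    ring
  have hG2re : ∀ y, starRingEnd ℂ (G₂ y) = G₂ y := by
    intro y; rw [hG2y]
    simp only [map_mul, map_sub, map_div₀, map_neg, Complex.conj_conj, Complex.conj_I, map_ofNat]
    ring
  have hG1x : G₁ x = 0 := by rw [hG1y]; simp [hGx]
  have hG2x : G₂ x = 0 := by rw [hG2y]; simp [hGx]
  have hdecomp : F * F * G = F * F * G₁ + Complex.I • (F * F * G₂) := by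
    apply ContMDiffMap.ext; intro y
    show F y * F y * G y = F y * F y * G₁ y + Complex.I * (F y * F y * G₂ y)
    rw [hG1y, hG2y]
    linear_combination (F y * F y * (G y - starRingEnd ℂ (G y)) / 2) * Complex.I_mul_I
  rw [hdecomp, map_add, map_smul]
  have e1 := aux_sq_real L hloc hcpd x F G₁ hF hG1re hFx hG1x
  have e2 := aux_sq_real L hloc hcpd x F G₂ hF hG2re hFx hG2x
  simp [ContinuousMap.add_apply, ContinuousMap.smul_apply, e1, e2]

/-- If `L : C^∞(M) → C(M)` is linear with `L 1 = 0`, local and conditionally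
positive definite, then for any `x ∈ M`, any smooth real functions `f₁, …, f_k` vanishing at `x`
and any smooth `g_{ij}` vanishing at `x`, one has `L (f_i f_j g_{ij}) x = 0`. -/
theorem local_condPosDef_vanishing [CompactSpace M]
    (L : C^(⊤ : ℕ∞)⟮𝓡 m, M; 𝓘(ℝ, ℂ), ℂ⟯ →ₗ[ℂ] C(M, ℂ))
    (hone : L 1 = 0) (hloc : IsLocalOp L) (hcpd : IsCondPosDef L)
    (x : M) (k : ℕ) (f : Fin k → C^(⊤ : ℕ∞)⟮𝓡 m, M; 𝓘(ℝ, ℂ), ℂ⟯)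
    (hreal : ∀ i y, starRingEnd ℂ (f i y) = f i y)
    (hfx : ∀ i, f i x = 0)
    (g : Fin k → Fin k → C^(⊤ : ℕ∞)⟮𝓡 m, M; 𝓘(ℝ, ℂ), ℂ⟯)
    (hgx : ∀ i j, g i j x = 0) :
    ∀ i j, L (f i * f j * g i j) x = 0 := by
  intro i j
  have key : ∀ F : C^(⊤ : ℕ∞)⟮𝓡 m, M; 𝓘(ℝ, ℂ), ℂ⟯,
      (∀ y, starRingEnd ℂ (F y) = F y) → F x = 0 → L (F * F * g i j) x = 0 :=
    fun F hFr hFx => aux_sq L hloc hcpd x F (g i j) hFr hFx (hgx i j)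
  have e : (f i + f j) * (f i + f j) * g i j =
      f i * f i * g i j + f j * f j * g i j + (2 : ℂ) • (f i * f j * g i j) := by
    apply ContMDiffMap.ext; intro y
    show (f i y + f j y) * (f i y + f j y) * g i j y =
      f i y * f i y * g i j y + f j y * f j y * g i j y +
        (2 : ℂ) * (f i y * f j y * g i j y)
    ring
  have h1 := key (f i + f j)
    (fun y => by show starRingEnd ℂ (f i y + f j y) = f i y + f j y;
                 rw [map_add, hreal i y, hreal j y])
    (by show f i x + f j x = 0; rw [hfx i, hfx j, add_zero])
  have h2 := key (f i) (hreal i) (hfx i)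
  have h3 := key (f j) (hreal j) (hfx j)
  rw [e, map_add, map_add, map_smul] at h1
  simp only [ContinuousMap.add_apply, ContinuousMap.smul_apply, smul_eq_mul, h2, h3,
    zero_add] at h1
  exact (mul_eq_zero.1 h1).resolve_left (by norm_num)
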